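/- The unique rational sequence (u_n) satisfying u_0 = 1, u_1 = 6 and the recurrence (n+1)^2 u_{n+1} = (17n^2+17n+6) u_n - 72 n^2 u_{n-1} for n \ge 1 takes only integer values; in fact u_n = \sum_{k=0}^n (-1)^k 8^{n-k} \binom{n}{k} \sum_{j=0}^k \binom{k}{j}^3 for all n. -/

import Mathlib

def sporadicF (n : ℕ) : ℤ :=
  ∑ k ∈ Finset.range (n + 1),
    (-1 : ℤ) ^ k * 8 ^ (n - k) * (n.choose k : ℤ) *
      ∑ j ∈ Finset.range (k + 1), (k.choose j : ℤ) ^ 3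

namespace SporadicAux

open Finset Nat

/-- Franel numbers, as rationals. -/
def fr (m : ℕ) : ℚ := ∑ j ∈ Finset.range (m + 1), (m.choose j : ℚ) ^ 3

lemma cc (k d : ℕ) :
    (((k + d).choose k : ℕ) : ℚ) = ((k + d)! : ℚ) / ((k ! : ℚ) * (d ! : ℚ)) := by
  rw [Nat.cast_choose ℚ (Nat.le_add_right k d)]
  simp

/-- The Zeilberger certificate polynomial for the Franel recurrence. -/
def Qp (x y : ℚ) : ℚ :=
  -72 + 78*y - 30*y^2 + 4*y^3
  + x*(-272 + 249*y - 78*y^2 + 8*y^3)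
  + x^2*(-402 + 291*y - 66*y^2 + 4*y^3)
  + x^3*(-290 + 147*y - 18*y^2)
  + x^4*(-102 + 27*y)
  - 14*x^5

/-- Telescoping partner for the Franel recurrence. -/
def gF (n k : ℕ) : ℚ :=
  (k : ℚ)^3 * Qp n k * (((n+2).choose k : ℕ) : ℚ)^3 / (((n:ℚ)+1)^3 * ((n:ℚ)+2)^3)

set_option maxHeartbeats 4000000 in
lemma P1 (n k : ℕ) (hk : k ≤ n + 2) :
    ((n:ℚ)+2)^2 * (((n+2).choose k : ℕ) : ℚ)^3
      - (7*(n:ℚ)^2 + 21*n + 16) * (((n+1).choose k : ℕ) : ℚ)^3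
      - 8*((n:ℚ)+1)^2 * ((n.choose k : ℕ) : ℚ)^3
    = gF n (k+1) - gF n k := by
  rcases Nat.lt_or_ge n k with h | h
  · -- k = n+1 or k = n+2
    obtain rfl | rfl := (by omega : k = n + 1 ∨ k = n + 2)
    · have c1 : (n+2).choose (n+1) = n+2 := Nat.choose_succ_self_right (n+1)
      have c2 : (n+1).choose (n+1) = 1 := Nat.choose_self (n+1)
      have c3 : n.choose (n+1) = 0 := Nat.choose_succ_self n
      have c4 : (n+2).choose (n+2) = 1 := Nat.choose_self (n+2)
      rw [gF, gF, c1, c2, c3, c4]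
      have h1 : ((n:ℚ)+1) ≠ 0 := by positivity
      have h2 : ((n:ℚ)+2) ≠ 0 := by positivity
      push_cast
      field_simp [Qp]
      unfold Qp; ring
    · have c1 : (n+2).choose (n+2) = 1 := Nat.choose_self (n+2)
      have c2 : (n+1).choose (n+2) = 0 := Nat.choose_succ_self (n+1)
      have c3 : n.choose (n+2) = 0 := Nat.choose_eq_zero_of_lt (by omega)
      have c4 : (n+2).choose (n+3) = 0 := Nat.choose_succ_self (n+2)
      rw [gF, gF, c1, c2, c3, c4]
      have h1 : ((n:ℚ)+1) ≠ 0 := by positivity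
      have h2 : ((n:ℚ)+2) ≠ 0 := by positivity
      push_cast
      field_simp [Qp]
      unfold Qp; ring
  · -- k ≤ n
    obtain ⟨d, rfl⟩ : ∃ d, n = k + d := ⟨n - k, by omega⟩
    have e0 : (((k+d).choose k : ℕ) : ℚ) = ((k+d)! : ℚ) / ((k ! : ℚ) * (d ! : ℚ)) := cc k d
    have e1 : (((k+d+1).choose k : ℕ) : ℚ) = ((k+d+1)! : ℚ) / ((k ! : ℚ) * ((d+1)! : ℚ)) := by
      have := cc k (d+1); rwa [show k + (d+1) = k + d + 1 by omega] at this
    have e2 : (((k+d+2).choose k : ℕ) : ℚ) = ((k+d+2)! : ℚ) / ((k ! : ℚ) * ((d+2)! : ℚ)) := by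
      have := cc k (d+2); rwa [show k + (d+2) = k + d + 2 by omega] at this
    have e3 : (((k+d+2).choose (k+1) : ℕ) : ℚ)
        = ((k+d+2)! : ℚ) / (((k+1)! : ℚ) * ((d+1)! : ℚ)) := by
      have := cc (k+1) (d+1); rwa [show k + 1 + (d+1) = k + d + 2 by omega] at this
    have f1 : ((k+d+1)! : ℚ) = ((k:ℚ)+d+1) * ((k+d)! : ℚ) := by
      rw [show k+d+1 = (k+d)+1 from rfl, Nat.factorial_succ]; push_cast; ring
    have f2 : ((k+d+2)! : ℚ) = ((k:ℚ)+d+2) * (((k:ℚ)+d+1) * ((k+d)! : ℚ)) := by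
      rw [show k+d+2 = (k+d+1)+1 from rfl, Nat.factorial_succ, ← f1]; push_cast; ring
    have f3 : ((d+1)! : ℚ) = ((d:ℚ)+1) * (d ! : ℚ) := by
      rw [Nat.factorial_succ]; push_cast; ring
    have f4 : ((d+2)! : ℚ) = ((d:ℚ)+2) * (((d:ℚ)+1) * (d ! : ℚ)) := by
      rw [show d+2 = (d+1)+1 from rfl, Nat.factorial_succ, ← f3]; push_cast; ring
    have f5 : ((k+1)! : ℚ) = ((k:ℚ)+1) * (k ! : ℚ) := by
      rw [Nat.factorial_succ]; push_cast; ring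
    have hA : ((k+d)! : ℚ) ≠ 0 := by positivity
    have hB : (k ! : ℚ) ≠ 0 := by positivity
    have hC : (d ! : ℚ) ≠ 0 := by positivity
    have h1 : ((k:ℚ)+1) ≠ 0 := by positivity
    have h2 : ((d:ℚ)+1) ≠ 0 := by positivity
    have h3 : ((d:ℚ)+2) ≠ 0 := by positivity
    have h4 : ((k:ℚ)+(d:ℚ)+1) ≠ 0 := by positivity
    have h5 : ((k:ℚ)+(d:ℚ)+2) ≠ 0 := by positivity
    have q1 : (((k+d+1).choose k : ℕ) : ℚ)
        = (((k+d).choose k : ℕ) : ℚ)*((k:ℚ)+d+1)/((d:ℚ)+1) := by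
      rw [e1, f1, f3, e0]; field_simp
    have q2 : (((k+d+2).choose k : ℕ) : ℚ)
        = (((k+d).choose k : ℕ) : ℚ)*(((k:ℚ)+d+1)*((k:ℚ)+d+2))/(((d:ℚ)+1)*((d:ℚ)+2)) := by
      rw [e2, f2, f4, e0]; field_simp
    have q3 : (((k+d+2).choose (k+1) : ℕ) : ℚ)
        = (((k+d).choose k : ℕ) : ℚ)*(((k:ℚ)+d+1)*((k:ℚ)+d+2))/(((k:ℚ)+1)*((d:ℚ)+1)) := by
      rw [e3, f2, f3, f5, e0]; field_simp
    rw [gF, gF, q1, q2, q3]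
    push_cast
    field_simp [Qp]
    unfold Qp; ring

/-- The Franel recurrence. -/
lemma franel_rec (n : ℕ) :
    ((n:ℚ)+2)^2 * fr (n+2)
      = (7*(n:ℚ)^2 + 21*n + 16) * fr (n+1) + 8*((n:ℚ)+1)^2 * fr n := by
  have tsum :
      ∑ k ∈ range (n+3),
        (((n:ℚ)+2)^2 * (((n+2).choose k : ℕ) : ℚ)^3
          - (7*(n:ℚ)^2 + 21*n + 16) * (((n+1).choose k : ℕ) : ℚ)^3
          - 8*((n:ℚ)+1)^2 * ((n.choose k : ℕ) : ℚ)^3)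
        = ∑ k ∈ range (n+3), (gF n (k+1) - gF n k) := by
    refine Finset.sum_congr rfl fun k hk => ?_
    exact P1 n k (by have := Finset.mem_range.1 hk; omega)
  rw [Finset.sum_range_sub (gF n)] at tsum
  have hg0 : gF n 0 = 0 := by simp [gF]
  have hgN : gF n (n+3) = 0 := by
    have : (n+2).choose (n+3) = 0 := Nat.choose_succ_self (n+2)
    simp [gF, this]
  rw [hg0, hgN] at tsum
  have s2 : ∑ k ∈ range (n+3), (((n+2).choose k : ℕ) : ℚ)^3 = fr (n+2) := rfl
  have s1 : ∑ k ∈ range (n+3), (((n+1).choose k : ℕ) : ℚ)^3 = fr (n+1) := by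
    rw [Finset.sum_range_succ]
    simp [fr, Nat.choose_succ_self]
  have s0 : ∑ k ∈ range (n+3), ((n.choose k : ℕ) : ℚ)^3 = fr n := by
    rw [Finset.sum_range_succ, Finset.sum_range_succ]
    simp [fr, Nat.choose_succ_self, Nat.choose_eq_zero_of_lt (by omega : n < n + 2)]
  simp only [Finset.sum_sub_distrib, ← Finset.mul_sum, s2, s1, s0] at tsum
  linarith

/-- The Franel recurrence, shifted form. -/
lemma franel_rec' (k : ℕ) :
    ((k:ℚ)+1)^2 * fr (k+1)
      = (7*(k:ℚ)^2 + 7*k + 2) * fr k + 8*(k:ℚ)^2 * fr (k-1) := by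
  cases k with
  | zero => norm_num [fr, Finset.sum_range_succ]
  | succ m =>
    have h := franel_rec m
    have : (m + 1 : ℕ) - 1 = m := rfl
    rw [this]
    push_cast
    push_cast at h
    linear_combination h

/-- Telescoping partner for the main recurrence. -/
def gT (n k : ℕ) : ℚ :=
  (-1:ℚ)^k * 8^n / 8^k * 64 * (k:ℚ)^2 *
    ( -(k:ℚ) * (((n+2).choose k : ℕ) : ℚ) * fr k / ((n:ℚ)+2)
      + (((n+1).choose k : ℕ) : ℚ) * fr (k-1) )

set_option maxHeartbeats 4000000 in
lemma P2 (n k : ℕ) (hk : k ≤ n + 2) :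
    ((n:ℚ)+2)^2 * ((-1:ℚ)^k * 8^((n+2)-k) * (((n+2).choose k : ℕ) : ℚ)) * fr k
      - (17*(n:ℚ)^2 + 51*n + 40) * ((-1:ℚ)^k * 8^((n+1)-k) * (((n+1).choose k : ℕ) : ℚ)) * fr k
      + 72*((n:ℚ)+1)^2 * ((-1:ℚ)^k * 8^(n-k) * ((n.choose k : ℕ) : ℚ)) * fr k
    = gT n (k+1) - gT n k := by
  have hfr : fr (k+1) = ((7*(k:ℚ)^2 + 7*k + 2) * fr k + 8*(k:ℚ)^2 * fr (k-1)) / ((k:ℚ)+1)^2 := by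
    rw [eq_div_iff (by positivity)]
    linear_combination franel_rec' k
  rcases Nat.lt_or_ge n k with h | h
  · obtain rfl | rfl := (by omega : k = n + 1 ∨ k = n + 2)
    · have c1 : (n+2).choose (n+1) = n+2 := Nat.choose_succ_self_right (n+1)
      have c2 : (n+1).choose (n+1) = 1 := Nat.choose_self (n+1)
      have c3 : n.choose (n+1) = 0 := Nat.choose_succ_self n
      have c4 : (n+2).choose (n+2) = 1 := Nat.choose_self (n+2)
      have c5 : (n+1).choose (n+2) = 0 := Nat.choose_succ_self (n+1)
      have x1 : (n+2) - (n+1) = 1 := by omega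
      have x2 : (n+1) - (n+1) = 0 := by omega
      have x3 : n - (n+1) = 0 := by omega
      have x4 : (n+2) - 1 = n+1 := by omega
      have x5 : (n+1) - 1 = n := by omega
      rw [x5] at hfr
      rw [show n+1+1 = n+2 from rfl] at hfr
      rw [gT, gT, c1, c2, c3, c4, c5, x1, x2, x3, x4, x5, hfr]
      have h1 : ((n:ℚ)+1) ≠ 0 := by positivity
      have h2 : ((n:ℚ)+2) ≠ 0 := by positivity
      have h8 : ((8:ℚ))^n ≠ 0 := by positivity
      have p81 : ((8:ℚ))^(n+1) = 8^n * 8 := pow_succ 8 n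
      have p82 : ((8:ℚ))^(n+2) = 8^n * 8 * 8 := by rw [pow_succ, pow_succ]
      have pm1 : ((-1:ℚ))^(n+1) = (-1)^n * (-1) := pow_succ (-1) n
      have pm2 : ((-1:ℚ))^(n+2) = (-1)^n := by rw [pow_succ, pow_succ]; ring
      rw [p81, p82, pm1, pm2]
      push_cast
      field_simp
      ring
    · have c1 : (n+2).choose (n+2) = 1 := Nat.choose_self (n+2)
      have c2 : (n+1).choose (n+2) = 0 := Nat.choose_succ_self (n+1)
      have c3 : n.choose (n+2) = 0 := Nat.choose_eq_zero_of_lt (by omega)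
      have c4 : (n+2).choose (n+3) = 0 := Nat.choose_succ_self (n+2)
      have c5 : (n+1).choose (n+3) = 0 := Nat.choose_eq_zero_of_lt (by omega)
      have x1 : (n+2) - (n+2) = 0 := by omega
      have x2 : (n+1) - (n+2) = 0 := by omega
      have x3 : n - (n+2) = 0 := by omega
      have x4 : (n+2) - 1 = n+1 := by omega
      rw [gT, gT, c1, c2, c3, c4, c5, x1, x2, x3, x4]
      have h2 : ((n:ℚ)+2) ≠ 0 := by positivity
      have h8 : ((8:ℚ))^n ≠ 0 := by positivity
      have p82 : ((8:ℚ))^(n+2) = 8^n * 8 * 8 := by rw [pow_succ, pow_succ]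
      have p83 : ((8:ℚ))^(n+3) = 8^n * 8 * 8 * 8 := by rw [pow_succ, pow_succ, pow_succ]
      have pm2 : ((-1:ℚ))^(n+2) = (-1)^n := by rw [pow_succ, pow_succ]; ring
      have pm3 : ((-1:ℚ))^(n+3) = (-1)^n * (-1) := by rw [pow_succ, pow_succ, pow_succ]; ring
      rw [p82, p83, pm2, pm3]
      push_cast
      field_simp
      ring
  · obtain ⟨d, rfl⟩ : ∃ d, n = k + d := ⟨n - k, by omega⟩
    have e0 : (((k+d).choose k : ℕ) : ℚ) = ((k+d)! : ℚ) / ((k ! : ℚ) * (d ! : ℚ)) := cc k d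
    have e1 : (((k+d+1).choose k : ℕ) : ℚ) = ((k+d+1)! : ℚ) / ((k ! : ℚ) * ((d+1)! : ℚ)) := by
      have := cc k (d+1); rwa [show k + (d+1) = k + d + 1 by omega] at this
    have e2 : (((k+d+2).choose k : ℕ) : ℚ) = ((k+d+2)! : ℚ) / ((k ! : ℚ) * ((d+2)! : ℚ)) := by
      have := cc k (d+2); rwa [show k + (d+2) = k + d + 2 by omega] at this
    have e3 : (((k+d+2).choose (k+1) : ℕ) : ℚ)
        = ((k+d+2)! : ℚ) / (((k+1)! : ℚ) * ((d+1)! : ℚ)) := by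
      have := cc (k+1) (d+1); rwa [show k + 1 + (d+1) = k + d + 2 by omega] at this
    have e4 : (((k+d+1).choose (k+1) : ℕ) : ℚ)
        = ((k+d+1)! : ℚ) / (((k+1)! : ℚ) * (d ! : ℚ)) := by
      have := cc (k+1) d; rwa [show k + 1 + d = k + d + 1 by omega] at this
    have f1 : ((k+d+1)! : ℚ) = ((k:ℚ)+d+1) * ((k+d)! : ℚ) := by
      rw [show k+d+1 = (k+d)+1 from rfl, Nat.factorial_succ]; push_cast; ring
    have f2 : ((k+d+2)! : ℚ) = ((k:ℚ)+d+2) * (((k:ℚ)+d+1) * ((k+d)! : ℚ)) := by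
      rw [show k+d+2 = (k+d+1)+1 from rfl, Nat.factorial_succ, ← f1]; push_cast; ring
    have f3 : ((d+1)! : ℚ) = ((d:ℚ)+1) * (d ! : ℚ) := by
      rw [Nat.factorial_succ]; push_cast; ring
    have f4 : ((d+2)! : ℚ) = ((d:ℚ)+2) * (((d:ℚ)+1) * (d ! : ℚ)) := by
      rw [show d+2 = (d+1)+1 from rfl, Nat.factorial_succ, ← f3]; push_cast; ring
    have f5 : ((k+1)! : ℚ) = ((k:ℚ)+1) * (k ! : ℚ) := by
      rw [Nat.factorial_succ]; push_cast; ring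
    have hA : ((k+d)! : ℚ) ≠ 0 := by positivity
    have hB : (k ! : ℚ) ≠ 0 := by positivity
    have hC : (d ! : ℚ) ≠ 0 := by positivity
    have h1 : ((k:ℚ)+1) ≠ 0 := by positivity
    have h2 : ((d:ℚ)+1) ≠ 0 := by positivity
    have h3 : ((d:ℚ)+2) ≠ 0 := by positivity
    have h4 : ((k:ℚ)+(d:ℚ)+1) ≠ 0 := by positivity
    have h5 : ((k:ℚ)+(d:ℚ)+2) ≠ 0 := by positivity
    have q1 : (((k+d+1).choose k : ℕ) : ℚ)
        = (((k+d).choose k : ℕ) : ℚ)*((k:ℚ)+d+1)/((d:ℚ)+1) := by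
      rw [e1, f1, f3, e0]; field_simp
    have q2 : (((k+d+2).choose k : ℕ) : ℚ)
        = (((k+d).choose k : ℕ) : ℚ)*(((k:ℚ)+d+1)*((k:ℚ)+d+2))/(((d:ℚ)+1)*((d:ℚ)+2)) := by
      rw [e2, f2, f4, e0]; field_simp
    have q3 : (((k+d+2).choose (k+1) : ℕ) : ℚ)
        = (((k+d).choose k : ℕ) : ℚ)*(((k:ℚ)+d+1)*((k:ℚ)+d+2))/(((k:ℚ)+1)*((d:ℚ)+1)) := by
      rw [e3, f2, f3, f5, e0]; field_simp
    have q4 : (((k+d+1).choose (k+1) : ℕ) : ℚ)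
        = (((k+d).choose k : ℕ) : ℚ)*((k:ℚ)+d+1)/((k:ℚ)+1) := by
      rw [e4, f1, f5, e0]; field_simp
    have x1 : (k+d+2) - k = d+2 := by omega
    have x2 : (k+d+1) - k = d+1 := by omega
    have x3 : (k+d) - k = d := by omega
    have x4 : (k+1) - 1 = k := by omega
    rw [gT, gT, x1, x2, x3, x4, hfr, q1, q2, q3, q4]
    have h8 : ((8:ℚ))^k ≠ 0 := by positivity
    have h8d : ((8:ℚ))^d ≠ 0 := by positivity
    have p8 : ((8:ℚ))^(k+d) = 8^k * 8^d := pow_add 8 k d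
    have p81 : ((8:ℚ))^(k+1) = 8^k * 8 := pow_succ 8 k
    have p8d1 : ((8:ℚ))^(d+1) = 8^d * 8 := pow_succ 8 d
    have p8d2 : ((8:ℚ))^(d+2) = 8^d * 8 * 8 := by rw [pow_succ, pow_succ]
    have pm : ((-1:ℚ))^(k+1) = (-1)^k * (-1) := pow_succ (-1) k
    rw [p8, p81, p8d1, p8d2, pm]
    push_cast
    field_simp
    ring

/-- The explicit sum, as a rational sequence. -/
def Fq (n : ℕ) : ℚ :=
  ∑ k ∈ Finset.range (n+1), (-1:ℚ)^k * 8^(n-k) * ((n.choose k : ℕ) : ℚ) * fr k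

lemma F_rec (n : ℕ) :
    ((n:ℚ)+2)^2 * Fq (n+2)
      = (17*(n:ℚ)^2 + 51*n + 40) * Fq (n+1) - 72*((n:ℚ)+1)^2 * Fq n := by
  have tsum :
      ∑ k ∈ range (n+3),
        (((n:ℚ)+2)^2 * ((-1:ℚ)^k * 8^((n+2)-k) * (((n+2).choose k : ℕ) : ℚ)) * fr k
          - (17*(n:ℚ)^2 + 51*n + 40) * ((-1:ℚ)^k * 8^((n+1)-k) * (((n+1).choose k : ℕ) : ℚ)) * fr k
          + 72*((n:ℚ)+1)^2 * ((-1:ℚ)^k * 8^(n-k) * ((n.choose k : ℕ) : ℚ)) * fr k)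
        = ∑ k ∈ range (n+3), (gT n (k+1) - gT n k) := by
    refine Finset.sum_congr rfl fun k hk => ?_
    exact P2 n k (by have := Finset.mem_range.1 hk; omega)
  rw [Finset.sum_range_sub (gT n)] at tsum
  have hg0 : gT n 0 = 0 := by simp [gT]
  have hgN : gT n (n+3) = 0 := by
    have c4 : (n+2).choose (n+3) = 0 := Nat.choose_succ_self (n+2)
    have c5 : (n+1).choose (n+3) = 0 := Nat.choose_eq_zero_of_lt (by omega)
    simp [gT, c4, c5]
  rw [hg0, hgN] at tsum
  have s2 : ∑ k ∈ range (n+3), (-1:ℚ)^k * 8^((n+2)-k) * (((n+2).choose k : ℕ) : ℚ) * fr k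
      = Fq (n+2) := rfl
  have s1 : ∑ k ∈ range (n+3), (-1:ℚ)^k * 8^((n+1)-k) * (((n+1).choose k : ℕ) : ℚ) * fr k
      = Fq (n+1) := by
    rw [Finset.sum_range_succ]
    simp [Fq, Nat.choose_succ_self]
  have s0 : ∑ k ∈ range (n+3), (-1:ℚ)^k * 8^(n-k) * ((n.choose k : ℕ) : ℚ) * fr k
      = Fq n := by
    rw [Finset.sum_range_succ, Finset.sum_range_succ]
    simp [Fq, Nat.choose_succ_self, Nat.choose_eq_zero_of_lt (by omega : n < n + 2)]
  calc ((n:ℚ)+2)^2 * Fq (n+2)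
      = ∑ k ∈ range (n+3),
          (((n:ℚ)+2)^2 * ((-1:ℚ)^k * 8^((n+2)-k) * (((n+2).choose k : ℕ) : ℚ)) * fr k) := by
        rw [← s2, Finset.mul_sum]; refine Finset.sum_congr rfl fun k hk => by ring
    _ = (17*(n:ℚ)^2 + 51*n + 40) * Fq (n+1) - 72*((n:ℚ)+1)^2 * Fq n := by
        have expand :
            ∑ k ∈ range (n+3),
              (((n:ℚ)+2)^2 * ((-1:ℚ)^k * 8^((n+2)-k) * (((n+2).choose k : ℕ) : ℚ)) * fr k)
            = ∑ k ∈ range (n+3),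
              (((n:ℚ)+2)^2 * ((-1:ℚ)^k * 8^((n+2)-k) * (((n+2).choose k : ℕ) : ℚ)) * fr k
              - (17*(n:ℚ)^2 + 51*n + 40) * ((-1:ℚ)^k * 8^((n+1)-k) * (((n+1).choose k : ℕ) : ℚ)) * fr k
              + 72*((n:ℚ)+1)^2 * ((-1:ℚ)^k * 8^(n-k) * ((n.choose k : ℕ) : ℚ)) * fr k)
              + ((17*(n:ℚ)^2 + 51*n + 40) * ∑ k ∈ range (n+3), ((-1:ℚ)^k * 8^((n+1)-k) * (((n+1).choose k : ℕ) : ℚ) * fr k))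
              - (72*((n:ℚ)+1)^2 * ∑ k ∈ range (n+3), ((-1:ℚ)^k * 8^(n-k) * ((n.choose k : ℕ) : ℚ) * fr k)) := by
          rw [Finset.mul_sum, Finset.mul_sum, ← Finset.sum_add_distrib, ← Finset.sum_sub_distrib]
          refine Finset.sum_congr rfl fun k hk => by ring
        rw [expand, tsum, s1, s0]
        ring

lemma Fq_eq (n : ℕ) : (sporadicF n : ℚ) = Fq n := by
  rw [sporadicF, Fq]
  push_cast
  rfl

end SporadicAux

/-- The unique rational solution of the (17,6,72) recurrence with `u 0 = 1`, `u 1 = 6`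
takes integer values; in fact it is given by the explicit binomial sum `sporadicF`. -/
theorem sporadic_integrality (u : ℕ → ℚ) (h0 : u 0 = 1) (h1 : u 1 = 6)
    (hrec : ∀ n : ℕ, 1 ≤ n →
      ((n : ℚ) + 1) ^ 2 * u (n + 1)
        = (17 * (n : ℚ) ^ 2 + 17 * n + 6) * u n - 72 * (n : ℚ) ^ 2 * u (n - 1)) :
    (∀ n : ℕ, ∃ z : ℤ, u n = z) ∧ ∀ n : ℕ, u n = (sporadicF n : ℚ) := by
  open SporadicAux in
  have key : ∀ n : ℕ, u n = Fq n ∧ u (n+1) = Fq (n+1) := by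
    intro n
    induction n with
    | zero =>
      constructor
      · rw [h0]; norm_num [Fq, fr, Finset.sum_range_succ]
      · rw [h1]; norm_num [Fq, fr, Finset.sum_range_succ]
    | succ m ih =>
      refine ⟨ih.2, ?_⟩
      have hm := hrec (m+1) (by omega)
      have hx : (m+1 : ℕ) - 1 = m := by omega
      rw [hx, ih.1, ih.2] at hm
      push_cast at hm
      have hF := F_rec m
      have e : ((m:ℚ)+2)^2 * u (m+2) = ((m:ℚ)+2)^2 * Fq (m+2) := by
        rw [show ((m:ℕ)+1+1) = m+2 from rfl] at hm
        linear_combination hm - hF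
      exact mul_left_cancel₀ (by positivity) e
  have main : ∀ n : ℕ, u n = (sporadicF n : ℚ) := by
    intro n
    rw [(key n).1, SporadicAux.Fq_eq]
  exact ⟨fun n => ⟨sporadicF n, main n⟩, main⟩
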